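/- Let Z be a commutative unital ℂ-algebra and let F(u) = Σ_{k≥0} F_k u^{−2k} be a formal power series with coefficients F_k ∈ Z and constant term F₀ = −(ρq^{1/2}/(q−q⁻¹)²)·1 (an invertible scalar multiple of the identity). Suppose ν(u) ∈ Z((u⁻¹)) is an invertible formal Laurent series in u⁻¹ satisfying the functional relation F(u)·ν(u)·ν(uq) = 1, where ν(uq) is obtained from ν(u) by the substitution u ↦ uq. Then ν(u) is a power series supported in even nonpositive degrees, ν(u) = Σ_{k≥0} ν_k u^{−2k}; its constant term satisfies ν₀² = −ρ⁻¹q^{−1/2}(q−q⁻¹)², and all higher coefficients are determined recursively by ν_k = −F₀⁻¹·Σ_{ℓ=0}^{k−1} ((1−q^{−2(k+ℓ)})/(1−q^{−4k}))·F_{k−ℓ}·ν_ℓ for k ≥ 1. -/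

import Mathlib

noncomputable section

lemma isPWO_Ici (a : ℤ) : (Set.Ici a).IsPWO :=
  Set.IsWF.isPWO (BddBelow.wellFoundedOn_lt bddBelow_Ici)

section HahnDefs
variable {B : Type*} [Ring B] [Algebra ℂ B]

/-- The formal power series in `u⁻¹` with coefficient `c n` at `u^{-n}`, as a formal Laurent
series.  Throughout, the coefficient of a Hahn series at `m : ℤ` represents the coefficient
of `u^{-m}` (so that bounded-below supports means finitely many positive powers of `u`). -/
def mkS (c : ℕ → B) : HahnSeries ℤ B :=
  ⟨fun m => if 0 ≤ m then c m.toNat else 0, by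
    apply (isPWO_Ici 0).mono
    intro m hm
    rw [Set.mem_Ici]
    by_contra h
    push_neg at h
    exact hm (if_neg (not_le.mpr h))⟩

/-- The series `u` itself (coefficient `1` at Hahn degree `-1`). -/
def uS (B : Type*) [Ring B] : HahnSeries ℤ B := HahnSeries.single (-1) 1

/-- The series `u⁻¹`. -/
def uiS (B : Type*) [Ring B] : HahnSeries ℤ B := HahnSeries.single 1 1

/-- The substitution `u ↦ u t^a` on formal Laurent series, acting on the coefficient of
`u^{-m}` by the scalar `t^{-am}`. -/
def shf (t : ℂ) (a : ℤ) (f : HahnSeries ℤ B) : HahnSeries ℤ B :=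
  ⟨fun m => t ^ (-(a * m)) • f.coeff m, by
    apply f.isPWO_support.mono
    intro m hm
    simp only [Function.mem_support, ne_eq] at hm ⊢
    exact fun h => hm (by rw [h, smul_zero])⟩

end HahnDefs

/-- The formal power series `F(u) = ∑_{k≥0} F_k u^{-2k}` attached to the even coefficient
family `Fc`. -/
def mkEv {Z : Type*} [CommRing Z] (Fc : ℕ → Z) : HahnSeries ℤ Z :=
  ⟨fun m => if 0 ≤ m ∧ 2 ∣ m then Fc (m / 2).toNat else 0, by
    apply (isPWO_Ici 0).mono
    intro m hm
    rw [Set.mem_Ici]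
    by_contra h
    push_neg at h
    exact hm (if_neg (by omega))⟩

section Helpers
variable {B : Type*} [CommRing B] [Algebra ℂ B]

/-- generic mul coeff over enlarged supports -/
lemma hahn_mul_coeff_subset (x y : HahnSeries ℤ B) {s t : Set ℤ}
    (hs : s.IsPWO) (ht : t.IsPWO) (hxs : x.support ⊆ s) (hyt : y.support ⊆ t) (a : ℤ) :
    (x * y).coeff a = ∑ ij ∈ Finset.antidiagonal hs ht a, x.coeff ij.1 * y.coeff ij.2 := by
  rw [HahnSeries.coeff_mul]
  apply Finset.sum_subset
  · intro ij hij
    rw [Finset.mem_antidiagonal] at hij ⊢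
    exact ⟨hxs hij.1, hyt hij.2.1, hij.2.2⟩
  · intro ij hmem hij
    rw [Finset.mem_antidiagonal] at hij hmem
    by_cases h1 : x.coeff ij.1 = 0
    · rw [h1, zero_mul]
    by_cases h2 : y.coeff ij.2 = 0
    · rw [h2, mul_zero]
    · exact absurd ⟨h1, h2, hmem.2.2⟩ hij

lemma mul_coeff_neg' (x y : HahnSeries ℤ B) (hx : ∀ m : ℤ, x.coeff m ≠ 0 → 0 ≤ m)
    (hy : ∀ m : ℤ, y.coeff m ≠ 0 → 0 ≤ m) {m : ℤ} (hm : m < 0) : (x * y).coeff m = 0 := by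
  rw [HahnSeries.coeff_mul]
  apply Finset.sum_eq_zero
  intro ij hij
  rw [Finset.mem_antidiagonal] at hij
  have h1 := hx _ hij.1
  have h2 := hy _ hij.2.1
  exact absurd hij.2.2 (by omega)

lemma mul_coeff_zero' (x y : HahnSeries ℤ B) (hx : ∀ m : ℤ, x.coeff m ≠ 0 → 0 ≤ m)
    (hy : ∀ m : ℤ, y.coeff m ≠ 0 → 0 ≤ m) : (x * y).coeff 0 = x.coeff 0 * y.coeff 0 := by
  rw [HahnSeries.coeff_mul]
  have hsub : Finset.antidiagonal x.isPWO_support y.isPWO_support 0 ⊆ {((0:ℤ),(0:ℤ))} := by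
    intro ij hij
    rw [Finset.mem_antidiagonal] at hij
    have h1 := hx _ hij.1
    have h2 := hy _ hij.2.1
    rw [Finset.mem_singleton]
    have h3 : ij.1 = 0 ∧ ij.2 = 0 := by omega
    exact Prod.ext h3.1 h3.2
  have hz : ∀ ij ∈ ({((0:ℤ),(0:ℤ))} : Finset (ℤ × ℤ)),
      ij ∉ Finset.antidiagonal x.isPWO_support y.isPWO_support 0 →
      x.coeff ij.1 * y.coeff ij.2 = 0 := by
    intro ij hij hnot
    rw [Finset.mem_singleton] at hij
    subst hij
    rw [Finset.mem_antidiagonal] at hnot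
    by_cases h1 : x.coeff 0 = 0
    · exact mul_eq_zero_of_left h1 _
    by_cases h2 : y.coeff 0 = 0
    · exact mul_eq_zero_of_right _ h2
    exact absurd ⟨h1, h2, add_zero 0⟩ hnot
  rw [Finset.sum_subset hsub hz, Finset.sum_singleton]

end Helpers

section ShfLemmas
variable {B : Type*} [CommRing B] [Algebra ℂ B]

lemma shf_coeff (t : ℂ) (a : ℤ) (f : HahnSeries ℤ B) (m : ℤ) :
    (shf t a f).coeff m = t ^ (-(a * m)) • f.coeff m := rfl

lemma shf_support (t : ℂ) (a : ℤ) (f : HahnSeries ℤ B) :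
    (shf t a f).support ⊆ f.support := by
  intro m hm
  rw [HahnSeries.mem_support] at hm ⊢
  intro h
  exact hm (by rw [shf_coeff, h, smul_zero])

lemma shf_one (t : ℂ) (a : ℤ) : shf t a (1 : HahnSeries ℤ B) = 1 := by
  ext m
  rw [shf_coeff]
  by_cases h : m = 0
  · subst h; simp
  · rw [HahnSeries.coeff_one, if_neg h, smul_zero]

lemma shf_mul {t : ℂ} (ht : t ≠ 0) (a : ℤ) (x y : HahnSeries ℤ B) :
    shf t a (x * y) = shf t a x * shf t a y := by
  ext m
  rw [shf_coeff, HahnSeries.coeff_mul,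
    hahn_mul_coeff_subset _ _ x.isPWO_support y.isPWO_support
      (shf_support t a x) (shf_support t a y) m,
    Finset.smul_sum]
  apply Finset.sum_congr rfl
  intro ij hij
  rw [Finset.mem_antidiagonal] at hij
  rw [shf_coeff, shf_coeff, smul_mul_smul_comm, ← zpow_add₀ ht]
  rw [← hij.2.2, mul_add, neg_add]

end ShfLemmas

/-- Let `Z` be a commutative ℂ-algebra, `F(u) = ∑_k F_k u^{-2k}` with
`F₀ = -(ρ q^{1/2}/(q-q⁻¹)²)·1` (where `ρ = k₊k₋(q+q⁻¹)²` and `q^{1/2} = t`), and let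
`ν(u) ∈ Z((u⁻¹))` be an invertible formal Laurent series with `F(u)ν(u)ν(uq) = 1` (the
substitution `u ↦ uq` acting coefficientwise).  Then `ν` is supported in even nonpositive
`u`-degrees, `ν₀² = -ρ⁻¹q^{-1/2}(q-q⁻¹)²`, and
`ν_k = -F₀⁻¹ ∑_{ℓ=0}^{k-1} ((1-q^{-2(k+ℓ)})/(1-q^{-4k})) F_{k-ℓ} ν_ℓ` for `k ≥ 1`. -/
theorem statement19 (q t kp km : ℂ) (hq0 : q ≠ 0) (ht : t ^ 2 = q)
    (hqru : ∀ n : ℕ, n ≠ 0 → q ^ n ≠ 1)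
    (hkp : kp ≠ 0) (hkm : km ≠ 0)
    (Z : Type*) [CommRing Z] [Algebra ℂ Z]
    (Fc : ℕ → Z)
    (hF0 : Fc 0 = algebraMap ℂ Z (-(kp * km * (q + q⁻¹) ^ 2 * t) / (q - q⁻¹) ^ 2))
    (ν : HahnSeries ℤ Z) (hν : IsUnit ν)
    (hrel : mkEv Fc * ν * shf q 1 ν = 1) :
    (∀ m : ℤ, ν.coeff m ≠ 0 → 0 ≤ m ∧ 2 ∣ m) ∧
    ν.coeff 0 ^ 2 = algebraMap ℂ Z (-(q - q⁻¹) ^ 2 / (kp * km * (q + q⁻¹) ^ 2 * t)) ∧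
    (∀ k : ℕ, 1 ≤ k →
      ν.coeff (2 * (k : ℤ)) =
        (-((-(kp * km * (q + q⁻¹) ^ 2 * t) / (q - q⁻¹) ^ 2)⁻¹) : ℂ) •
          ∑ l ∈ Finset.range k,
            (((1 - q ^ (-(2 * ((k : ℤ) + (l : ℤ))))) / (1 - q ^ (-(4 * (k : ℤ))))) : ℂ) •
              (Fc (k - l) * ν.coeff (2 * (l : ℤ)))) := by
  clear hν
  rcases subsingleton_or_nontrivial Z with hZ | hZ
  · exact ⟨fun m hm => absurd (Subsingleton.elim _ _) hm, Subsingleton.elim _ _,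
      fun k _ => Subsingleton.elim _ _⟩
  -- basic scalar facts
  have ht0 : t ≠ 0 := by
    intro h
    rw [h] at ht
    exact hq0 (by rw [← ht]; ring)
  have hqi : q + q⁻¹ ≠ 0 := by
    intro h
    have h2 : q ^ 2 = -1 := by
      field_simp at h
      linear_combination h
    exact hqru 4 (by norm_num) (by rw [show (4:ℕ) = 2*2 from rfl, pow_mul, h2]; ring)
  have hqs : q - q⁻¹ ≠ 0 := by
    intro h
    have h2 : q ^ 2 = 1 := by
      field_simp at h
      linear_combination h
    exact hqru 2 (by norm_num) h2
  set c : ℂ := -(kp * km * (q + q⁻¹) ^ 2 * t) / (q - q⁻¹) ^ 2 with hcdef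
  have hc : c ≠ 0 :=
    div_ne_zero (neg_ne_zero.mpr (mul_ne_zero (mul_ne_zero (mul_ne_zero hkp hkm)
      (pow_ne_zero 2 hqi)) ht0)) (pow_ne_zero 2 hqs)
  have hqz : ∀ n : ℤ, n ≠ 0 → q ^ n ≠ 1 := by
    intro n hn
    rcases lt_or_gt_of_ne hn with h | h
    · intro he
      have he' : q ^ (-n) = 1 := by
        rw [← inv_inv (q ^ (-n)), ← zpow_neg, neg_neg, he, inv_one]
      have h2 := hqru (-n).toNat (by omega)
      rw [← zpow_natCast, Int.toNat_of_nonneg (by omega)] at h2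
      exact h2 he'
    · intro he
      have h2 := hqru n.toNat (by omega)
      rw [← zpow_natCast, Int.toNat_of_nonneg (by omega)] at h2
      exact h2 he
  have h1q : ∀ n : ℤ, n ≠ 0 → (1 - q ^ n) ≠ 0 := fun n hn => sub_ne_zero.mpr (hqz n hn).symm
  have hsm : ∀ (a : ℂ) (z : Z), a ≠ 0 → a • z = 0 → z = 0 := by
    intro a z ha h
    have h2 : (a⁻¹ * a) • z = 0 := by rw [mul_smul, h, smul_zero]
    rwa [inv_mul_cancel₀ ha, one_smul] at h2
  have hF0ne : Fc 0 ≠ 0 := by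
    rw [hF0]
    intro h
    have h2 : (algebraMap ℂ Z) c⁻¹ * algebraMap ℂ Z c = 0 := by rw [h, mul_zero]
    rw [← map_mul, inv_mul_cancel₀ hc, map_one] at h2
    exact one_ne_zero h2
  have hFcan : ∀ z : Z, Fc 0 * z = 0 → z = 0 := by
    intro z h
    refine hsm c z hc ?_
    rw [Algebra.smul_def, ← hF0]
    exact h
  have hmkEv_coeff : ∀ m : ℤ, (mkEv Fc).coeff m
      = if 0 ≤ m ∧ 2 ∣ m then Fc (m / 2).toNat else 0 := fun _ => rfl
  have hmkEv0 : (mkEv Fc).coeff 0 = Fc 0 := by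
    rw [hmkEv_coeff]
    norm_num
  have hmkEvsupp : ∀ i : ℤ, (mkEv Fc).coeff i ≠ 0 → 0 ≤ i ∧ 2 ∣ i := by
    intro i hi
    by_contra h
    exact hi (by rw [hmkEv_coeff, if_neg h])
  -- the twisted relation
  have hσrel : shf q 1 (mkEv Fc) * shf q 1 ν * shf q 1 (shf q 1 ν) = 1 := by
    have h := congrArg (shf q 1) hrel
    rwa [shf_mul hq0, shf_mul hq0, shf_one] at h
  have hkey : mkEv Fc * ν = shf q 1 (mkEv Fc) * shf q 1 (shf q 1 ν) := by
    calc mkEv Fc * ν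
        = (mkEv Fc * ν) * (shf q 1 (mkEv Fc) * shf q 1 ν * shf q 1 (shf q 1 ν)) := by
          rw [hσrel, mul_one]
      _ = (mkEv Fc * ν * shf q 1 ν) * (shf q 1 (mkEv Fc) * shf q 1 (shf q 1 ν)) := by ring
      _ = shf q 1 (mkEv Fc) * shf q 1 (shf q 1 ν) := by rw [hrel, one_mul]
  -- the coefficientwise master equation
  have hE : ∀ m : ℤ,
      ∑ ij ∈ Finset.antidiagonal (mkEv Fc).isPWO_support ν.isPWO_support m,
        (1 - q ^ (-(m + ij.2))) • ((mkEv Fc).coeff ij.1 * ν.coeff ij.2) = 0 := by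
    intro m
    have h1 : (mkEv Fc * ν).coeff m =
        ∑ ij ∈ Finset.antidiagonal (mkEv Fc).isPWO_support ν.isPWO_support m,
          (mkEv Fc).coeff ij.1 * ν.coeff ij.2 := HahnSeries.coeff_mul
    have h2 : (shf q 1 (mkEv Fc) * shf q 1 (shf q 1 ν)).coeff m =
        ∑ ij ∈ Finset.antidiagonal (mkEv Fc).isPWO_support ν.isPWO_support m,
          q ^ (-(m + ij.2)) • ((mkEv Fc).coeff ij.1 * ν.coeff ij.2) := by
      rw [hahn_mul_coeff_subset _ _ (mkEv Fc).isPWO_support ν.isPWO_support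
        (shf_support q 1 _) ((shf_support q 1 _).trans (shf_support q 1 _)) m]
      apply Finset.sum_congr rfl
      intro ij hij
      rw [Finset.mem_antidiagonal] at hij
      obtain ⟨-, -, hsum⟩ := hij
      rw [shf_coeff, shf_coeff, shf_coeff, smul_smul, smul_mul_smul_comm,
        ← zpow_add₀ hq0, ← zpow_add₀ hq0]
      have hexp : -(1 * ij.1) + (-(1 * ij.2) + -(1 * ij.2)) = -(m + ij.2) := by omega
      rw [hexp]
    have hterm : ∀ ij ∈ Finset.antidiagonal (mkEv Fc).isPWO_support ν.isPWO_support m,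
        (1 - q ^ (-(m + ij.2))) • ((mkEv Fc).coeff ij.1 * ν.coeff ij.2)
        = ((mkEv Fc).coeff ij.1 * ν.coeff ij.2)
          - q ^ (-(m + ij.2)) • ((mkEv Fc).coeff ij.1 * ν.coeff ij.2) := by
      intro ij _
      rw [sub_smul, one_smul]
    rw [Finset.sum_congr rfl hterm, Finset.sum_sub_distrib, ← h1, ← h2, ← hkey, sub_self]
  -- Part 1: support claim
  have hsupp : ∀ m : ℤ, ν.coeff m ≠ 0 → 0 ≤ m ∧ 2 ∣ m := by
    by_contra hbad
    push_neg at hbad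
    obtain ⟨m0, hm0, hbad0⟩ := hbad
    set S : Set ℤ := {n : ℤ | ν.coeff n ≠ 0 ∧ ¬(0 ≤ n ∧ 2 ∣ n)} with hSdef
    have hSsub : S ⊆ ν.support := fun n hn => hn.1
    have hwf : S.IsWF := (ν.isPWO_support.isWF).mono hSsub
    have hne : S.Nonempty := ⟨m0, hm0, fun h => (hbad0 h.1) h.2⟩
    set b := hwf.min hne with hbdef
    have hb : b ∈ S := hwf.min_mem hne
    have hmin : ∀ n ∈ S, ¬ n < b := fun n hn => hwf.not_lt_min hne hn
    have hADsub : Finset.antidiagonal (mkEv Fc).isPWO_support ν.isPWO_support b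
        ⊆ {((0:ℤ), b)} := by
      intro ij hij
      rw [Finset.mem_antidiagonal] at hij
      obtain ⟨hiF, hjν, hsum⟩ := hij
      have hi := hmkEvsupp _ hiF
      have hjne : ν.coeff ij.2 ≠ 0 := hjν
      by_cases hi0 : ij.1 = 0
      · rw [Finset.mem_singleton]
        exact Prod.ext hi0 (by omega)
      · exfalso
        have hj : ij.2 ∈ S := by
          refine ⟨hjne, ?_⟩
          intro hgood
          have hbb : ¬(0 ≤ b ∧ 2 ∣ b) := hb.2
          exact hbb ⟨by omega, by omega⟩
        exact hmin _ hj (by omega)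
    have hz : ∀ ij ∈ ({((0:ℤ), b)} : Finset (ℤ × ℤ)),
        ij ∉ Finset.antidiagonal (mkEv Fc).isPWO_support ν.isPWO_support b →
        (1 - q ^ (-(b + ij.2))) • ((mkEv Fc).coeff ij.1 * ν.coeff ij.2) = 0 := by
      intro ij h1 h2
      exfalso
      apply h2
      rw [Finset.mem_singleton] at h1
      subst h1
      rw [Finset.mem_antidiagonal]
      refine ⟨?_, hb.1, zero_add b⟩
      rw [HahnSeries.mem_support, hmkEv0]
      exact hF0ne
    have hEb := hE b
    rw [Finset.sum_subset hADsub hz, Finset.sum_singleton] at hEb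
    have hb0 : b ≠ 0 := by
      intro h
      exact hb.2 (by omega)
    have hmul : (mkEv Fc).coeff 0 * ν.coeff b = 0 :=
      hsm _ _ (h1q (-(b + b)) (by omega)) hEb
    rw [hmkEv0] at hmul
    exact hb.1 (hFcan _ hmul)
  refine ⟨hsupp, ?_, ?_⟩
  -- Part 2: constant term
  · have hFnn : ∀ m : ℤ, (mkEv Fc).coeff m ≠ 0 → 0 ≤ m := fun m hm => (hmkEvsupp m hm).1
    have hνnn : ∀ m : ℤ, ν.coeff m ≠ 0 → 0 ≤ m := fun m hm => (hsupp m hm).1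
    have hσnn : ∀ m : ℤ, (shf q 1 ν).coeff m ≠ 0 → 0 ≤ m := by
      intro m hm
      rw [shf_coeff] at hm
      exact hνnn m (fun h => hm (by rw [h, smul_zero]))
    have hFνnn : ∀ m : ℤ, (mkEv Fc * ν).coeff m ≠ 0 → 0 ≤ m := by
      intro m hm
      by_contra h
      exact hm (mul_coeff_neg' _ _ hFnn hνnn (by omega))
    have h20 : (mkEv Fc * ν * shf q 1 ν).coeff 0 = Fc 0 * (ν.coeff 0 * ν.coeff 0) := by
      rw [mul_coeff_zero' _ _ hFνnn hσnn, mul_coeff_zero' _ _ hFnn hνnn, shf_coeff, hmkEv0]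
      norm_num
      ring
    rw [hrel] at h20
    have hone : (1 : HahnSeries ℤ Z).coeff 0 = 1 := by
      rw [HahnSeries.coeff_one, if_pos rfl]
    rw [hone] at h20
    have hc1 : c • (ν.coeff 0 ^ 2) = 1 := by
      rw [Algebra.smul_def, ← hF0, sq]
      exact h20.symm
    have hsq : ν.coeff 0 ^ 2 = algebraMap ℂ Z c⁻¹ := by
      calc ν.coeff 0 ^ 2 = (c⁻¹ * c) • ν.coeff 0 ^ 2 := by rw [inv_mul_cancel₀ hc, one_smul]
        _ = c⁻¹ • (c • ν.coeff 0 ^ 2) := by rw [mul_smul]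
        _ = c⁻¹ • (1 : Z) := by rw [hc1]
        _ = algebraMap ℂ Z c⁻¹ := by rw [Algebra.smul_def, mul_one]
    rw [hsq]
    congr 1
    rw [hcdef, inv_div, div_neg]
    exact (neg_div _ _).symm
  -- Part 3: recursion
  · intro k hk
    have hE2k := hE (2 * (k : ℤ))
    have hADsub : Finset.antidiagonal (mkEv Fc).isPWO_support ν.isPWO_support (2 * (k : ℤ))
        ⊆ (Finset.range (k + 1)).image
          (fun l : ℕ => ((2 * (k : ℤ) - 2 * (l : ℤ), 2 * (l : ℤ)) : ℤ × ℤ)) := by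
      intro ij hij
      rw [Finset.mem_antidiagonal] at hij
      obtain ⟨hiF, hjν, hsum⟩ := hij
      have hi := hmkEvsupp _ hiF
      have hj := hsupp _ hjν
      rw [Finset.mem_image]
      refine ⟨(ij.2 / 2).toNat, Finset.mem_range.mpr (by omega), ?_⟩
      apply Prod.ext <;> simp only [] <;> omega
    have hzero : ∀ ij ∈ (Finset.range (k + 1)).image
          (fun l : ℕ => ((2 * (k : ℤ) - 2 * (l : ℤ), 2 * (l : ℤ)) : ℤ × ℤ)),
        ij ∉ Finset.antidiagonal (mkEv Fc).isPWO_support ν.isPWO_support (2 * (k : ℤ)) →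
        (1 - q ^ (-(2 * (k : ℤ) + ij.2))) • ((mkEv Fc).coeff ij.1 * ν.coeff ij.2) = 0 := by
      intro ij hmem hnot
      rw [Finset.mem_image] at hmem
      obtain ⟨l, hl, rfl⟩ := hmem
      by_cases h1 : (mkEv Fc).coeff (2 * (k : ℤ) - 2 * (l : ℤ)) = 0
      · rw [h1, zero_mul, smul_zero]
      by_cases h2 : ν.coeff (2 * (l : ℤ)) = 0
      · rw [h2, mul_zero, smul_zero]
      refine absurd ?_ hnot
      rw [Finset.mem_antidiagonal]
      refine ⟨h1, h2, ?_⟩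
      show 2 * (k : ℤ) - 2 * (l : ℤ) + 2 * (l : ℤ) = 2 * (k : ℤ)
      ring
    rw [Finset.sum_subset hADsub hzero] at hE2k
    rw [Finset.sum_image (by
      intro a _ b _ hab
      simp only [Prod.mk.injEq] at hab
      omega)] at hE2k
    have hterm : ∀ l ∈ Finset.range (k + 1),
        (1 - q ^ (-(2 * (k : ℤ) + 2 * (l : ℤ)))) •
          ((mkEv Fc).coeff (2 * (k : ℤ) - 2 * (l : ℤ)) * ν.coeff (2 * (l : ℤ)))
        = (1 - q ^ (-(2 * ((k : ℤ) + (l : ℤ))))) • (Fc (k - l) * ν.coeff (2 * (l : ℤ))) := by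
      intro l hl
      rw [Finset.mem_range] at hl
      have hF : (mkEv Fc).coeff (2 * (k : ℤ) - 2 * (l : ℤ)) = Fc (k - l) := by
        rw [hmkEv_coeff, if_pos ⟨by omega, by omega⟩]
        congr 1
        omega
      rw [hF]
      congr 2
      ring
    rw [Finset.sum_congr rfl hterm, Finset.sum_range_succ] at hE2k
    rw [show (-(2 * ((k : ℤ) + (k : ℤ)))) = -(4 * (k : ℤ)) by ring, Nat.sub_self] at hE2k
    have hd : (1 - q ^ (-(4 * (k : ℤ)))) ≠ 0 := h1q _ (by omega)
    have hmain : ∑ l ∈ Finset.range k,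
        (1 - q ^ (-(2 * ((k : ℤ) + (l : ℤ))))) • (Fc (k - l) * ν.coeff (2 * (l : ℤ)))
        = -((1 - q ^ (-(4 * (k : ℤ)))) • (Fc 0 * ν.coeff (2 * (k : ℤ)))) :=
      eq_neg_of_add_eq_zero_left hE2k
    have hrw : ∀ l ∈ Finset.range k,
        ((1 - q ^ (-(2 * ((k : ℤ) + (l : ℤ))))) / (1 - q ^ (-(4 * (k : ℤ))))) •
          (Fc (k - l) * ν.coeff (2 * (l : ℤ)))
        = (1 - q ^ (-(4 * (k : ℤ))))⁻¹ •
          ((1 - q ^ (-(2 * ((k : ℤ) + (l : ℤ))))) • (Fc (k - l) * ν.coeff (2 * (l : ℤ)))) := by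
      intro l _
      rw [div_eq_mul_inv, mul_comm, mul_smul]
    rw [Finset.sum_congr rfl hrw, ← Finset.smul_sum, hmain, smul_neg, smul_smul,
      inv_mul_cancel₀ hd, one_smul, smul_neg, neg_smul, neg_neg, hF0, ← Algebra.smul_def,
      smul_smul, inv_mul_cancel₀ hc, one_smul]
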